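/- Let g be a Lie algebra with nondegenerate symmetric invariant bilinear form ⟨·,·⟩, and let ĝ_p be the three-point affine Lie algebra with underlying space g⊗ℂ[t,t⁻¹] ⊕ g¹⊗ℂ[t,t⁻¹] ⊕ ℂκ₊ ⊕ ℂκ₋ and the defining brackets below. Let g̃⁻ = g⊗ℂ((t⁻¹)) ⊕ ℂκ with [a⊗f, b⊗g] = [a,b]⊗fg + ⟨a,b⟩ Res_t(f'g) κ. Then the linear map ρ₋ sending a(n) ↦ a⊗t^n, a¹(n) ↦ ∑_{i≥0} λ_i 4^i a⊗t^{n-i+1}, κ₊ ↦ 0, κ₋ ↦ κ is a Lie algebra homomorphism ρ₋ : ĝ_p → g̃⁻. -/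

import Mathlib

open scoped TensorProduct

noncomputable def lam (n : ℕ) : ℂ :=
  (∏ k ∈ Finset.range n, ((1 : ℂ) / 2 - k)) / n.factorial

/-- λ_k for k ∈ ℤ, with λ_k = 0 for k < 0. -/
noncomputable def lamZ (k : ℤ) : ℂ := if 0 ≤ k then lam k.toNat else 0

/-- We model ℂ((t⁻¹)) as formal Laurent series in s = t⁻¹, so t^k ↦ s^{-k}
(`HahnSeries.single (-k) 1`) and Res_t (the coefficient of t⁻¹) is the
coefficient of s¹. `lderiv` is d/ds and `tderiv` is d/dt = -s² d/ds. -/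
noncomputable def lderiv (F : LaurentSeries ℂ) : LaurentSeries ℂ where
  coeff k := (k + 1 : ℤ) • F.coeff (k + 1)
  isPWO_support' := by
    have h : (Function.support fun k : ℤ => (k + 1 : ℤ) • F.coeff (k + 1)) ⊆
        (fun k : ℤ => k - 1) '' F.support := by
      intro k hk
      simp only [Function.mem_support] at hk
      refine ⟨k + 1, ?_, by ring⟩
      simp only [HahnSeries.mem_support]
      intro h0
      apply hk
      rw [h0, smul_zero]
    exact (F.isPWO_support.image_of_monotone (fun a b hab => by omega)).mono h

noncomputable def tderiv (F : LaurentSeries ℂ) : LaurentSeries ℂ :=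
  -(HahnSeries.single (2 : ℤ) (1 : ℂ) * lderiv F)

/-- t^n as an element of ℂ((t⁻¹)). -/
noncomputable def tn (n : ℤ) : LaurentSeries ℂ := HahnSeries.single (-n : ℤ) (1 : ℂ)

/-- u = ∑_{i≥0} λ_i 4^i t^{1-i}, the expansion of √(t²+4t) at infinity, so that
∑_{i≥0} λ_i 4^i t^{n-i+1} = t^n · u. -/
noncomputable def uInf : LaurentSeries ℂ :=
  HahnSeries.single (-1 : ℤ) (1 : ℂ) *
    HahnSeries.ofPowerSeries ℤ ℂ (PowerSeries.mk fun i => lam i * 4 ^ i)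

noncomputable def P0 : PowerSeries ℂ := PowerSeries.mk fun i => lam i * 4 ^ i

lemma lam_zero : lam 0 = 1 := by simp [lam]
lemma lam_succ (n : ℕ) : ((n : ℂ) + 1) * lam (n + 1) = ((1:ℂ)/2 - n) * lam n := by
  have h1 : (n.factorial : ℂ) ≠ 0 := Nat.cast_ne_zero.mpr n.factorial_ne_zero
  have h2 : ((n:ℂ) + 1) ≠ 0 := Nat.cast_add_one_ne_zero n
  rw [lam, lam, Finset.prod_range_succ, Nat.factorial_succ]
  push_cast
  field_simp

open PowerSeries in
lemma ode : (1 + 4 * X) * derivative ℂ P0 = (2:ℂ) • P0 := by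
  have h4 : (4 : ℂ⟦X⟧) = PowerSeries.C (R := ℂ) 4 := by rw [map_ofNat]
  ext n
  rw [add_mul, one_mul, map_add, mul_assoc, h4, coeff_C_mul, map_smul]
  cases n with
  | zero =>
    rw [coeff_zero_X_mul]
    simp only [coeff_derivative, coeff_zero_eq_constantCoeff, smul_eq_mul, P0, coeff_mk,
      constantCoeff_mk, lam_zero]
    have h1 := lam_succ 0
    push_cast at h1 ⊢
    linear_combination (4:ℂ) * h1 + 2 * lam_zero
  | succ n =>
    rw [coeff_succ_X_mul, coeff_derivative, coeff_derivative]
    simp only [P0, coeff_mk, smul_eq_mul]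
    have h1 := lam_succ (n+1)
    push_cast at h1 ⊢
    linear_combination (4:ℂ)^(n+2) * h1

open PowerSeries in
lemma P0_sq : P0 * P0 = 1 + 4 * X := by
  have h4 : (4 : ℂ⟦X⟧) = PowerSeries.C (R := ℂ) 4 := by rw [map_ofNat]
  have hD : derivative ℂ (P0 * P0) = P0 * derivative ℂ P0 + P0 * derivative ℂ P0 := by
    rw [Derivation.leibniz, smul_eq_mul]
  have hODE : (1 + 4 * X) * derivative ℂ (P0 * P0) = (4:ℂ) • (P0 * P0) := by
    rw [hD]
    have : (1 + 4 * X) * (P0 * derivative ℂ P0 + P0 * derivative ℂ P0)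
        = P0 * ((1 + 4 * X) * derivative ℂ P0) + P0 * ((1 + 4 * X) * derivative ℂ P0) := by
      ring
    rw [this, ode, mul_smul_comm, ← add_smul]
    norm_num
  set Q := P0 * P0 with hQ
  have hrec : ∀ n : ℕ, ((n:ℂ)+2) * coeff (R := ℂ) (n+2) Q = (-4*(n:ℂ)) * coeff (R := ℂ) (n+1) Q := by
    intro n
    have h := congrArg (coeff (R := ℂ) (n+1)) hODE
    rw [add_mul, one_mul, map_add, mul_assoc, h4, coeff_C_mul, coeff_succ_X_mul,
      coeff_derivative, coeff_derivative, map_smul] at h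
    simp only [smul_eq_mul] at h
    push_cast at h ⊢
    linear_combination h
  have h0 : coeff (R := ℂ) 0 Q = 1 := by
    rw [coeff_zero_eq_constantCoeff, hQ, map_mul]
    simp [P0, lam_zero]
  have h1c : coeff (R := ℂ) 1 Q = 4 := by
    have h := congrArg (coeff (R := ℂ) 0) hODE
    rw [add_mul, one_mul, map_add, mul_assoc, h4, coeff_C_mul, coeff_zero_X_mul,
      coeff_derivative, map_smul, h0] at h
    simp only [smul_eq_mul] at h
    push_cast at h
    linear_combination h
  have hz : ∀ n : ℕ, coeff (R := ℂ) (n+2) Q = 0 := by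
    intro n
    induction n with
    | zero =>
      have h := hrec 0
      norm_num at h
      exact h
    | succ k ih =>
      have h := hrec (k+1)
      rw [ih, mul_zero] at h
      push_cast at h
      rcases mul_eq_zero.mp h with h' | h'
      · exfalso
        have hne : (((k:ℕ)+3 : ℕ):ℂ) ≠ 0 := Nat.cast_ne_zero.mpr (by omega)
        apply hne
        push_cast
        linear_combination h'
      · exact h'
  ext n
  match n with
  | 0 => simp [h0, coeff_one]
  | 1 => simp [h1c, h4, coeff_one]
  | (n+2) => simp [hz n, h4, coeff_one, coeff_X]

noncomputable def PL : LaurentSeries ℂ := HahnSeries.ofPowerSeries ℤ ℂ P0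

lemma uInf_def : uInf = HahnSeries.single (-1 : ℤ) (1 : ℂ) * PL := rfl

lemma tn_mul_tn (m n : ℤ) : tn m * tn n = tn (m + n) := by
  rw [tn, tn, tn, HahnSeries.single_mul_single, one_mul, neg_add]

lemma lderiv_coeff (F : LaurentSeries ℂ) (k : ℤ) :
    (lderiv F).coeff k = (k + 1 : ℤ) • F.coeff (k + 1) := rfl

lemma single_one_mul_coeff (c : ℤ) (F : LaurentSeries ℂ) (k : ℤ) :
    (HahnSeries.single c (1:ℂ) * F).coeff k = F.coeff (k - c) := by
  have h := HahnSeries.coeff_single_mul_add (r := (1:ℂ)) (x := F) (a := k - c) (b := c)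
  rw [sub_add_cancel, one_mul] at h
  exact h

lemma tderiv_coeff (F : LaurentSeries ℂ) (k : ℤ) :
    (tderiv F).coeff k = -((k - 1 : ℤ) • F.coeff (k - 1)) := by
  rw [tderiv, HahnSeries.coeff_neg, single_one_mul_coeff, lderiv_coeff]
  norm_num
  congr 2 <;> ring_nf

lemma ofPS_coeff (φ : PowerSeries ℂ) (k : ℤ) :
    (HahnSeries.ofPowerSeries ℤ ℂ φ).coeff k =
      if 0 ≤ k then PowerSeries.coeff (R := ℂ) k.toNat φ else 0 := by
  split_ifs with h
  · have hk : k = ((k.toNat : ℕ) : ℤ) := by omega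
    rw [hk, HahnSeries.ofPowerSeries_apply_coeff]
    congr 1
  · rw [HahnSeries.ofPowerSeries_apply, HahnSeries.embDomain_notin_range]
    rintro ⟨n, hn⟩
    simp only [Nat.castOrderEmbedding_apply] at hn
    omega

lemma lderiv_ofPS (φ : PowerSeries ℂ) :
    lderiv (HahnSeries.ofPowerSeries ℤ ℂ φ) =
      HahnSeries.ofPowerSeries ℤ ℂ (PowerSeries.derivative ℂ φ) := by
  ext k
  rw [lderiv_coeff, ofPS_coeff, ofPS_coeff]
  rcases lt_trichotomy k (-1) with h | h | h
  · rw [if_neg (by omega), if_neg (by omega), smul_zero]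
  · subst h
    norm_num
  · rw [if_pos (by omega), if_pos (by omega), PowerSeries.coeff_derivative]
    have hk : (k+1).toNat = k.toNat + 1 := by omega
    rw [hk, zsmul_eq_mul, mul_comm]
    congr 1
    norm_cast
    omega

lemma lderiv_single_mul (c : ℤ) (F : LaurentSeries ℂ) :
    lderiv (HahnSeries.single c (1:ℂ) * F) =
      (c:ℂ) • (HahnSeries.single (c-1) (1:ℂ) * F) + HahnSeries.single c (1:ℂ) * lderiv F := by
  ext k
  rw [HahnSeries.coeff_add, lderiv_coeff, single_one_mul_coeff, HahnSeries.coeff_smul,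
    single_one_mul_coeff, single_one_mul_coeff, lderiv_coeff]
  have h1 : k + 1 - c = k - (c - 1) := by ring
  have h2 : k - c + 1 = k - (c - 1) := by ring
  rw [h1, h2, zsmul_eq_mul, zsmul_eq_mul, smul_eq_mul]
  push_cast
  ring

lemma lderiv_PL : lderiv PL = HahnSeries.ofPowerSeries ℤ ℂ (PowerSeries.derivative ℂ P0) :=
  lderiv_ofPS P0

lemma tderiv_tn (m : ℤ) : tderiv (tn m) = (m:ℂ) • tn (m-1) := by
  ext k
  rw [tderiv_coeff, HahnSeries.coeff_smul]
  simp only [tn, HahnSeries.coeff_single]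
  by_cases h : k = -(m-1)
  · rw [if_pos h, if_pos (by omega)]
    have hk : k - 1 = -m := by omega
    rw [hk]
    simp
  · rw [if_neg h, if_neg (by omega), smul_zero, neg_zero, smul_zero]

lemma csmul_mul (c : ℂ) (x y : LaurentSeries ℂ) : (c • x) * y = c • (x * y) := by
  rw [← HahnSeries.single_zero_mul_eq_smul, ← HahnSeries.single_zero_mul_eq_smul, mul_assoc]

lemma mul_csmul (c : ℂ) (x y : LaurentSeries ℂ) : x * (c • y) = c • (x * y) := by
  rw [← HahnSeries.single_zero_mul_eq_smul, ← HahnSeries.single_zero_mul_eq_smul]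
  ring

lemma tn_mul_uInf (a : ℤ) : tn a * uInf = HahnSeries.single (-(a+1)) (1:ℂ) * PL := by
  rw [uInf_def, ← mul_assoc, tn, HahnSeries.single_mul_single, one_mul]
  congr 1
  ring

lemma res_tn_tn (m n : ℤ) :
    (tderiv (tn m) * tn n).coeff 1 = (m:ℂ) * (if m + n = 0 then 1 else 0) := by
  rw [tderiv_tn, csmul_mul, tn_mul_tn, HahnSeries.coeff_smul]
  simp only [tn, HahnSeries.coeff_single, smul_eq_mul]
  by_cases h : m + n = 0
  · rw [if_pos (by omega), if_pos h]
  · rw [if_neg (by omega), if_neg h]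

lemma res_tn_u (m n : ℤ) :
    (tderiv (tn m) * (tn n * uInf)).coeff 1 =
      (m:ℂ) * lamZ (m + n + 1) * (4:ℂ) ^ (m + n + 1) := by
  rw [tderiv_tn, csmul_mul, ← mul_assoc, tn_mul_tn, tn_mul_uInf, HahnSeries.coeff_smul,
    single_one_mul_coeff, PL]
  rw [ofPS_coeff]
  have hidx : (1:ℤ) - -(m - 1 + n + 1) = m + n + 1 := by ring
  rw [hidx]
  by_cases h : 0 ≤ m + n + 1
  · rw [if_pos h, lamZ, if_pos h]
    simp only [P0, PowerSeries.coeff_mk, smul_eq_mul]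
    rw [show m + n + 1 = (((m+n+1).toNat : ℕ) : ℤ) by omega, zpow_natCast]
    ring_nf
    rw [Int.toNat_natCast]   -- may not be needed
  · rw [if_neg h, lamZ, if_neg h, smul_zero]
    ring

open PowerSeries in
lemma P0_deriv_mul : derivative ℂ P0 * P0 = 2 := by
  have hne : (1 + 4 * X : ℂ⟦X⟧) ≠ 0 := by
    intro h
    have := congrArg (constantCoeff (R := ℂ)) h
    simp at this
  apply mul_left_cancel₀ hne
  rw [← mul_assoc, ode, smul_mul_assoc, P0_sq, smul_eq_C_mul, map_ofNat]
  ring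

lemma PL_mul_PL : PL * PL = HahnSeries.ofPowerSeries ℤ ℂ (1 + 4 * PowerSeries.X) := by
  rw [PL, ← map_mul, P0_sq]

lemma D_mul_PL :
    HahnSeries.ofPowerSeries ℤ ℂ (PowerSeries.derivative ℂ P0) * PL = 2 := by
  rw [PL, ← map_mul, P0_deriv_mul, map_ofNat]

lemma neg_csmul (c : ℂ) (x : LaurentSeries ℂ) : -(c • x) = (-c) • x := by
  ext k
  rw [HahnSeries.coeff_neg, HahnSeries.coeff_smul, HahnSeries.coeff_smul, smul_eq_mul,
    smul_eq_mul, neg_mul]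

lemma tderiv_single_PL (c : ℤ) :
    tderiv (HahnSeries.single c (1:ℂ) * PL) =
      (-(c:ℂ)) • (HahnSeries.single (c+1) (1:ℂ) * PL) -
        HahnSeries.single (c+2) (1:ℂ) *
          HahnSeries.ofPowerSeries ℤ ℂ (PowerSeries.derivative ℂ P0) := by
  rw [tderiv, lderiv_single_mul, lderiv_PL, mul_add, mul_csmul, ← mul_assoc, ← mul_assoc,
    HahnSeries.single_mul_single, HahnSeries.single_mul_single, one_mul,
    show (2:ℤ) + (c - 1) = c + 1 by ring, show (2:ℤ) + c = c + 2 by ring,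
    neg_add, sub_eq_add_neg, neg_csmul]

lemma four_laurent : (4 : LaurentSeries ℂ) = HahnSeries.single 0 (4:ℂ) := by
  have h := map_ofNat (HahnSeries.C : ℂ →+* HahnSeries ℤ ℂ) 4
  rw [← h, HahnSeries.C_apply]

lemma two_laurent : (2 : LaurentSeries ℂ) = HahnSeries.single 0 (2:ℂ) := by
  have h := map_ofNat (HahnSeries.C : ℂ →+* HahnSeries ℤ ℂ) 2
  rw [← h, HahnSeries.C_apply]

lemma csmul_single (c : ℂ) (a : ℤ) : c • HahnSeries.single a (1:ℂ) = HahnSeries.single a c := by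
  rw [← HahnSeries.single_zero_mul_eq_smul, HahnSeries.single_mul_single, zero_add, mul_one]

lemma ofPS_one_add :
    HahnSeries.ofPowerSeries ℤ ℂ (1 + 4 * PowerSeries.X) = 1 + HahnSeries.single 1 (4:ℂ) := by
  have h4 : (4 : PowerSeries ℂ) = PowerSeries.C (R := ℂ) 4 := by rw [map_ofNat]
  rw [map_add, map_one, h4, map_mul, HahnSeries.ofPowerSeries_C, HahnSeries.ofPowerSeries_X,
    HahnSeries.C_apply, HahnSeries.single_mul_single, zero_add, mul_one]

lemma single_PL_mul (c d : ℤ) :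
    (HahnSeries.single c (1:ℂ) * PL) * (HahnSeries.single d (1:ℂ) * PL) =
      HahnSeries.single (c+d) (1:ℂ) * (1 + HahnSeries.single 1 (4:ℂ)) := by
  rw [mul_mul_mul_comm, HahnSeries.single_mul_single, one_mul, PL_mul_PL, ofPS_one_add]

lemma single_D_mul (c d : ℤ) :
    (HahnSeries.single c (1:ℂ) *
        HahnSeries.ofPowerSeries ℤ ℂ (PowerSeries.derivative ℂ P0)) *
      (HahnSeries.single d (1:ℂ) * PL) = HahnSeries.single (c+d) (2:ℂ) := by
  rw [mul_mul_mul_comm, HahnSeries.single_mul_single, one_mul, D_mul_PL, two_laurent,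
    HahnSeries.single_mul_single, add_zero, one_mul]

lemma uu_mul (m n : ℤ) :
    (tn m * uInf) * (tn n * uInf) = tn (m+n+2) + (4:ℂ) • tn (m+n+1) := by
  rw [tn_mul_uInf, tn_mul_uInf, single_PL_mul, mul_add, mul_one, HahnSeries.single_mul_single,
    tn, tn, csmul_single, one_mul]
  congr 2 <;> ring

lemma res_u_u (m n : ℤ) :
    (tderiv (tn m * uInf) * (tn n * uInf)).coeff 1 =
      (4*(m:ℂ)+2) * (if m+n+1 = 0 then 1 else 0) +
        ((m:ℂ)+1) * (if m+n+2 = 0 then 1 else 0) := by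
  rw [tn_mul_uInf m, tn_mul_uInf n, tderiv_single_PL, sub_mul, csmul_mul, single_PL_mul,
    single_D_mul, HahnSeries.coeff_sub, HahnSeries.coeff_smul, single_one_mul_coeff,
    HahnSeries.coeff_add, HahnSeries.coeff_one, HahnSeries.coeff_single,
    HahnSeries.coeff_single,
    show (1:ℤ) - (-(m + 1) + 1 + -(n + 1)) = m+n+2 by ring]
  simp only [smul_eq_mul]
  by_cases h2 : m + n + 2 = 0
  · rw [if_pos h2, if_neg (by omega), if_neg (by omega), if_neg (by omega), if_pos h2]
    push_cast
    ring
  · by_cases h1 : m + n + 1 = 0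
    · rw [if_neg h2, if_pos (by omega), if_pos (by omega), if_pos h1, if_neg h2]
      push_cast
      ring
    · rw [if_neg h2, if_neg (by omega), if_neg (by omega), if_neg h1, if_neg h2]
      push_cast
      ring


/-- The underlying space of g̃⁻ = g ⊗ ℂ((t⁻¹)) ⊕ ℂκ. -/
abbrev Gt (L : Type*) [LieRing L] [LieAlgebra ℂ L] : Type _ :=
  (TensorProduct ℂ L (LaurentSeries ℂ)) × ℂ

/-- The bracket of g̃⁻ on pure tensors:
[a⊗f, b⊗g] = [a,b]⊗fg + ⟨a,b⟩ Res_t(f'g) κ. -/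
noncomputable def pbr {L : Type*} [LieRing L] [LieAlgebra ℂ L]
    (B : LinearMap.BilinForm ℂ L) (a : L) (f : LaurentSeries ℂ)
    (b : L) (g : LaurentSeries ℂ) : Gt L :=
  (⁅a, b⁆ ⊗ₜ[ℂ] (f * g), B a b * (tderiv f * g).coeff 1)

/-- ρ₋(a(n)) = a ⊗ t^n. -/
noncomputable def rhoA {L : Type*} [LieRing L] [LieAlgebra ℂ L]
    (a : L) (n : ℤ) : Gt L := (a ⊗ₜ[ℂ] tn n, 0)

/-- ρ₋(a¹(n)) = ∑_{i≥0} λ_i 4^i a ⊗ t^{n-i+1} = a ⊗ (t^n u). -/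
noncomputable def rhoA1 {L : Type*} [LieRing L] [LieAlgebra ℂ L]
    (a : L) (n : ℤ) : Gt L := (a ⊗ₜ[ℂ] (tn n * uInf), 0)

/-- ρ₋(κ₋) = κ (and ρ₋(κ₊) = 0). -/
noncomputable def kap (L : Type*) [LieRing L] [LieAlgebra ℂ L] : Gt L := (0, 1)

/-- ρ₋ : ĝ_p → g̃⁻ is a Lie algebra homomorphism: it preserves the defining
brackets of the three-point affine Lie algebra ĝ_p on generators (the central
elements κ₊ ↦ 0, κ₋ ↦ κ are mapped to central elements, so this determines a
homomorphism by bilinearity). -/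
theorem rho_minus_lieHom {L : Type*} [LieRing L] [LieAlgebra ℂ L]
    (B : LinearMap.BilinForm ℂ L)
    (hsym : ∀ x y : L, B x y = B y x)
    (hinv : ∀ x y z : L, B ⁅x, y⁆ z = B x ⁅y, z⁆)
    (hnd : B.Nondegenerate) :
    ∀ (a b : L) (m n : ℤ),
      -- [a(m), b(n)] = [a,b](m+n) + m⟨a,b⟩δ_{m+n,0}(κ₊+κ₋)
      pbr B a (tn m) b (tn n) =
        rhoA ⁅a, b⁆ (m + n) +
          ((m : ℂ) * B a b * (if m + n = 0 then 1 else 0)) • kap L ∧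
      -- [a(m), b¹(n)] = [a,b]¹(m+n) + m⟨a,b⟩ λ_{m+n+1} 4^{m+n+1} κ₋
      pbr B a (tn m) b (tn n * uInf) =
        rhoA1 ⁅a, b⁆ (m + n) +
          ((m : ℂ) * B a b * lamZ (m + n + 1) * (4 : ℂ) ^ (m + n + 1)) • kap L ∧
      -- [a¹(m), b¹(n)] = 4[a,b](m+n+1) + [a,b](m+n+2)
      --   + ((4m+2)δ_{m+n+1,0} + (m+1)δ_{m+n+2,0})⟨a,b⟩(κ₊+κ₋)
      pbr B a (tn m * uInf) b (tn n * uInf) =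
        (4 : ℂ) • rhoA ⁅a, b⁆ (m + n + 1) + rhoA ⁅a, b⁆ (m + n + 2) +
          (((4 * (m : ℂ) + 2) * (if m + n + 1 = 0 then 1 else 0) +
            ((m : ℂ) + 1) * (if m + n + 2 = 0 then 1 else 0)) * B a b) • kap L := by
  intro a b m n
  refine ⟨?_, ?_, ?_⟩
  · refine Prod.ext ?_ ?_
    · simp only [pbr, rhoA, kap, Prod.smul_mk, Prod.mk_add_mk, smul_zero, add_zero, tn_mul_tn]
    · simp only [pbr, rhoA, kap, Prod.smul_mk, Prod.mk_add_mk, smul_eq_mul, mul_one, zero_add,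
        res_tn_tn]
      ring
  · refine Prod.ext ?_ ?_
    · simp only [pbr, rhoA1, kap, Prod.smul_mk, Prod.mk_add_mk, smul_zero, add_zero,
        ← mul_assoc, tn_mul_tn]
    · simp only [pbr, rhoA1, kap, Prod.smul_mk, Prod.mk_add_mk, smul_eq_mul, mul_one, zero_add,
        res_tn_u]
      ring
  · refine Prod.ext ?_ ?_
    · simp only [pbr, rhoA, kap, Prod.smul_mk, Prod.mk_add_mk, smul_zero, add_zero, zero_add,
        uu_mul, TensorProduct.tmul_add, TensorProduct.tmul_smul]
      rw [add_comm]
    · simp only [pbr, rhoA, kap, Prod.smul_mk, Prod.mk_add_mk, smul_eq_mul, mul_one, mul_zero,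
        add_zero, zero_add, res_u_u]
      ring
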